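/- Let R be a Prüfer domain. An R-module M is simple-direct-injective if and only if its torsion submodule T(M) is simple-direct-injective. -/

import Mathlib

section Defs

variable (R : Type*) [Ring R] (M : Type*) [AddCommGroup M] [Module R M]

/-- `K` is a small (superfluous) submodule of `M`. -/
def SmallSubmodule (K : Submodule R M) : Prop :=
  ∀ N : Submodule R M, K ⊔ N = ⊤ → N = ⊤

/-- `A` is a direct summand of `M`. -/
def IsDirectSummand (A : Submodule R M) : Prop :=
  ∃ B : Submodule R M, IsCompl A B

/-- The socle of `M`: the sum of all simple submodules. -/
def moduleSocle : Submodule R M :=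
  sSup {S : Submodule R M | IsSimpleModule R S}

/-- The (Jacobson) radical of `M`: the intersection of all maximal submodules. -/
def moduleRad : Submodule R M :=
  sInf {S : Submodule R M | IsCoatom S}

/-- `M` is simple-direct-projective. -/
def SimpleDirectProjective : Prop :=
  ∀ A B : Submodule R M, IsSimpleModule R B → Nonempty ((M ⧸ A) ≃ₗ[R] B) →
    IsDirectSummand R M B → IsDirectSummand R M A

/-- `M` is simple-direct-injective. -/
def SimpleDirectInjective : Prop :=
  ∀ A B : Submodule R M, IsSimpleModule R A → IsSimpleModule R B →
    Nonempty (A ≃ₗ[R] B) → IsDirectSummand R M B → IsDirectSummand R M A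

/-- `L` is a coclosed submodule of `M`. -/
def CoclosedSubmodule (L : Submodule R M) : Prop :=
  ∀ K : Submodule R M, K ≤ L →
    SmallSubmodule R (M ⧸ K) (L.map K.mkQ) → K = L

end Defs

/-- The `p`-primary component of an abelian group `M`. -/
def primaryComponent (M : Type*) [AddCommGroup M] (p : ℕ) : Submodule ℤ M :=
  Submodule.torsion' ℤ M (Submonoid.powers (p : ℤ))

section AuxProof

open Submodule

section Aux
variable {R : Type*} [CommRing R] [IsDomain R] {M : Type*} [AddCommGroup M] [Module R M]

/-- Purity of the torsion submodule over a Prüfer domain, for finitely generated ideals. -/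
lemma torsion_pure (hPrufer : ∀ I : Ideal R, I.FG → Module.Projective R I)
    (I : Ideal R) (hI : I.FG) {t : M} (ht : t ∈ Submodule.torsion R M)
    (htI : t ∈ I • (⊤ : Submodule R M)) : t ∈ I • (Submodule.torsion R M) := by
  classical
  by_cases hI0 : I = ⊥
  · subst hI0
    rw [Submodule.bot_smul] at htI
    simp only [Submodule.mem_bot] at htI
    subst htI
    exact zero_mem _
  obtain ⟨a₀, ha₀I, ha₀⟩ := Submodule.exists_mem_ne_zero_of_ne_bot hI0
  obtain ⟨σ, hσ⟩ := Module.projective_def.mp (hPrufer I hI)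
  -- symmetry of linear functionals on an ideal
  have hsym : ∀ (x z : ↥I) (e : ↥I), (x : R) * σ z e = (z : R) * σ x e := by
    intro x z e
    have h : (x : R) • z = (z : R) • x := Subtype.ext (mul_comm _ _)
    have h2 : σ ((x : R) • z) = σ ((z : R) • x) := by rw [h]
    rw [map_smul, map_smul] at h2
    have := congrArg (fun f : ↥I →₀ R => f e) h2
    simpa using this
  -- representation of t
  rw [show (⊤ : Submodule R M) = Submodule.span R (Set.range (id : M → M)) by
        simp [Submodule.span_univ]] at htI
  obtain ⟨a, haI, hat⟩ := (Submodule.mem_ideal_smul_span_iff_exists_sum I id t).mp htI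
  rw [Finsupp.sum] at hat
  set S := a.support with hS
  set α : M → ↥I := fun i => ⟨a i, haI i⟩ with hα
  set E : Finset ↥I := S.biUnion (fun i => (σ (α i)).support) with hE
  set y : ↥I → M := fun e => ∑ i ∈ S, σ (α i) e • i with hy
  -- dual basis identity, coerced to R
  have hdb : ∀ i ∈ S, ∑ e ∈ E, σ (α i) e * (e : R) = a i := by
    intro i hi
    have h1 : Finsupp.linearCombination R id (σ (α i)) = α i := hσ (α i)
    rw [Finsupp.linearCombination_apply, Finsupp.sum] at h1
    have h2 : ((∑ e ∈ (σ (α i)).support, σ (α i) e • (id e : ↥I) : ↥I) : R) = a i := by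
      rw [h1]
    push_cast at h2
    rw [← h2]
    symm
    apply Finset.sum_subset
    · intro e he
      exact Finset.mem_biUnion.mpr ⟨i, hi, he⟩
    · intro e _ he
      rw [Finsupp.notMem_support_iff] at he
      simp [he]
  -- t is the sum of the y e, weighted by e
  have hty : ∑ e ∈ E, (e : R) • y e = t := by
    rw [hy]
    simp only [Finset.smul_sum]
    rw [Finset.sum_comm]
    rw [← hat]
    apply Finset.sum_congr rfl
    intro i hi
    simp only [smul_smul]
    rw [← Finset.sum_smul]
    rw [show ∑ e ∈ E, (e : R) * σ (α i) e = ∑ e ∈ E, σ (α i) e * (e : R) from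
          Finset.sum_congr rfl fun e _ => mul_comm _ _, hdb i hi]
    rfl
  -- each y e is torsion
  obtain ⟨r, hr⟩ := (Submodule.mem_torsion_iff t).mp ht
  have hyt : ∀ e : ↥I, y e ∈ Submodule.torsion R M := by
    intro e
    refine (Submodule.mem_torsion_iff _).mpr
      ⟨⟨a₀ * (r : R), mul_mem (mem_nonZeroDivisors_of_ne_zero ha₀) r.2⟩, ?_⟩
    have : (a₀ * (r : R)) • y e = (σ ⟨a₀, ha₀I⟩ e) • ((r : R) • t) := by
      rw [hy]
      simp only [Finset.smul_sum, ← hat, Finset.smul_sum]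
      apply Finset.sum_congr rfl
      intro i _
      simp only [smul_smul]
      congr 1
      have := hsym ⟨a₀, ha₀I⟩ (α i) e
      simp only [hα] at this ⊢
      linear_combination (r : R) * this
    rw [Submonoid.smul_def, this]
    have hr' : (r : R) • t = 0 := hr
    rw [hr', smul_zero]
  rw [← hty]
  exact Submodule.sum_mem _ fun e _ => Submodule.smul_mem_smul e.2 (hyt e)

end Aux

section Aux2
variable {R : Type*} [CommRing R] {M : Type*} [AddCommGroup M] [Module R M]

/-- If `A` is disjoint from `m • ⊤` for a maximal ideal `m`, then `A` has a complement. -/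
lemma exists_isCompl_of_disjoint_smul (m : Ideal R) (hm : m.IsMaximal) (A : Submodule R M)
    (hd : A ⊓ (m • ⊤ : Submodule R M) = ⊥) : ∃ N, IsCompl A N := by
  classical
  set P : Set (Submodule R M) := {N | (m • ⊤ : Submodule R M) ≤ N ∧ A ⊓ N = ⊥} with hP
  have hP0 : (m • ⊤ : Submodule R M) ∈ P := ⟨le_rfl, hd⟩
  have hchain : ∀ c ⊆ P, IsChain (· ≤ ·) c → ∀ y ∈ c, ∃ ub ∈ P, ∀ z ∈ c, z ≤ ub := by
    intro c hcP hc N₀ hN₀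
    refine ⟨sSup c, ⟨?_, ?_⟩, fun z hz => le_sSup hz⟩
    · exact le_trans (hcP hN₀).1 (le_sSup hN₀)
    · rw [eq_bot_iff]
      intro x hx
      obtain ⟨hxA, hxS⟩ := Submodule.mem_inf.mp hx
      obtain ⟨N, hNc, hxN⟩ := (Submodule.mem_sSup_of_directed ⟨N₀, hN₀⟩
        hc.directedOn).mp hxS
      have : x ∈ A ⊓ N := Submodule.mem_inf.mpr ⟨hxA, hxN⟩
      rw [(hcP hNc).2] at this
      exact this
  obtain ⟨N, -, hNP, hNmax⟩ := zorn_le_nonempty₀ P hchain _ hP0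
  · refine ⟨N, ?_, ?_⟩
    · rw [disjoint_iff]; exact hNP.2
    · rw [codisjoint_iff, eq_top_iff]
      intro z _
      by_cases hz : z ∈ N
      · exact Submodule.mem_sup_right hz
      -- N ⊔ span {z} is strictly bigger, so it meets A nontrivially
      have hne : A ⊓ (N ⊔ Submodule.span R {z}) ≠ ⊥ := by
        intro hbot
        have hmem : N ⊔ Submodule.span R {z} ∈ P :=
          ⟨le_trans hNP.1 le_sup_left, hbot⟩
        have := hNmax hmem le_sup_left
        exact hz (this (Submodule.mem_sup_right (Submodule.mem_span_singleton_self z)))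
      obtain ⟨v, hv, hv0⟩ := Submodule.exists_mem_ne_zero_of_ne_bot hne
      obtain ⟨hvA, hvNZ⟩ := Submodule.mem_inf.mp hv
      obtain ⟨n, hn, w, hw, hnw⟩ := Submodule.mem_sup.mp hvNZ
      obtain ⟨r, rfl⟩ := Submodule.mem_span_singleton.mp hw
      have hrm : r ∉ m := by
        intro hrm
        have : r • z ∈ N := hNP.1 (Submodule.smul_mem_smul hrm trivial)
        have hvN : v ∈ N := hnw ▸ Submodule.add_mem N hn this
        have : v ∈ A ⊓ N := Submodule.mem_inf.mpr ⟨hvA, hvN⟩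
        rw [hNP.2] at this
        exact hv0 this
      -- 1 = s * r + i with i ∈ m
      obtain ⟨s, i, him, hsum⟩ := hm.exists_inv hrm
      have hz1 : z = s • (r • z) + i • z := by
        conv_lhs => rw [← one_smul R z, ← hsum]
        rw [add_smul, mul_smul]
      rw [hz1]
      refine Submodule.add_mem _ ?_ ?_
      · have hrz : r • z ∈ A ⊔ N := by
          have : r • z = v + (-n) := by rw [← hnw]; abel
          rw [this]
          exact Submodule.add_mem _ (Submodule.mem_sup_left hvA)
            (Submodule.mem_sup_right (neg_mem hn))
        exact Submodule.smul_mem _ s hrz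
      · exact Submodule.mem_sup_right (hNP.1 (Submodule.smul_mem_smul him trivial))

end Aux2

section Aux3
variable {R : Type*} [CommRing R] [IsDomain R] {M : Type*} [AddCommGroup M] [Module R M]

/-- Key lemma: a simple submodule which is a direct summand of the torsion submodule
is a direct summand of the whole module. -/
lemma exists_isCompl_of_compl_in_torsion
    (hPrufer : ∀ I : Ideal R, I.FG → Module.Projective R I)
    (A C : Submodule R M) (hA : IsSimpleModule R A)
    (hdisj : A ⊓ C = ⊥) (hsup : A ⊔ C = Submodule.torsion R M) : ∃ N, IsCompl A N := by
  classical
  haveI := hA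
  set m : Ideal R := A.annihilator with hm
  have hmax : m.IsMaximal := IsSimpleModule.annihilator_isMaximal
  apply exists_isCompl_of_disjoint_smul m hmax A
  rw [eq_bot_iff]
  intro s hs
  obtain ⟨hsA, hsm⟩ := Submodule.mem_inf.mp hs
  have hAT : A ≤ Submodule.torsion R M := hsup ▸ le_sup_left
  have hst : s ∈ Submodule.torsion R M := hAT hsA
  -- fish out a finitely generated subideal
  rw [show (⊤ : Submodule R M) = Submodule.span R (Set.range (id : M → M)) by
        simp [Submodule.span_univ]] at hsm
  obtain ⟨a, ham, has⟩ := (Submodule.mem_ideal_smul_span_iff_exists_sum m id s).mp hsm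
  set I : Ideal R := Ideal.span (↑(a.support.image a) : Set R) with hI
  have hIfg : I.FG := ⟨a.support.image a, rfl⟩
  have hIm : I ≤ m := by
    rw [hI, Ideal.span_le]
    intro r hr
    obtain ⟨i, _, rfl⟩ := Finset.mem_image.mp hr
    exact ham i
  have haI : ∀ i, a i ∈ I := by
    intro i
    by_cases h : i ∈ a.support
    · exact Ideal.subset_span (Finset.mem_coe.mpr (Finset.mem_image_of_mem a h))
    · rw [Finsupp.notMem_support_iff] at h
      rw [h]; exact zero_mem I
  have hsI : s ∈ I • (⊤ : Submodule R M) := by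
    rw [show (⊤ : Submodule R M) = Submodule.span R (Set.range (id : M → M)) by
          simp [Submodule.span_univ]]
    exact (Submodule.mem_ideal_smul_span_iff_exists_sum I id s).mpr ⟨a, haI, has⟩
  have hsIT := torsion_pure hPrufer I hIfg hst hsI
  rw [← hsup, Submodule.smul_sup] at hsIT
  have hIA : I • A = ⊥ := by
    rw [eq_bot_iff]
    refine Submodule.smul_le.mpr fun r hr x hx => ?_
    rw [Submodule.mem_bot]
    exact Submodule.mem_annihilator.mp (hIm hr) x hx
  rw [hIA, bot_sup_eq] at hsIT
  have hsC : s ∈ C := Submodule.smul_le_right hsIT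
  rw [← hdisj]
  exact Submodule.mem_inf.mpr ⟨hsA, hsC⟩

/-- Degenerate case: a faithful simple submodule forces the ring to be semisimple. -/
lemma exists_isCompl_of_ann_bot (A : Submodule R M) (hA : IsSimpleModule R A)
    (hann : A.annihilator = ⊥) : ∃ N, IsCompl A N := by
  haveI := hA
  have hmax : (⊥ : Ideal R).IsMaximal := hann ▸ IsSimpleModule.annihilator_isMaximal
  haveI : IsSimpleModule R R := (isSimpleModule_iff R R).mpr (isSimpleOrder_iff_isCoatom_bot.mpr (Ideal.isMaximal_def.mp hmax))
  haveI : IsSemisimpleRing R := inferInstance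
  exact exists_isCompl A

/-- Transfer: complements map down from a submodule. -/
lemma map_subtype_compl {T : Submodule R M} {X Y : Submodule R T} (h : IsCompl X Y) :
    X.map T.subtype ⊓ Y.map T.subtype = ⊥ ∧ X.map T.subtype ⊔ Y.map T.subtype = T := by
  constructor
  · rw [← Submodule.map_inf _ (Submodule.injective_subtype T), disjoint_iff.mp h.disjoint,
      Submodule.map_bot]
  · rw [← Submodule.map_sup, codisjoint_iff.mp h.codisjoint, Submodule.map_top,
      Submodule.range_subtype]

/-- Transfer: complements lift along comap from a submodule. -/
lemma comap_subtype_isCompl {T A C : Submodule R M} (hA : A ≤ T) (hC : C ≤ T)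
    (hd : A ⊓ C = ⊥) (hs : A ⊔ C = T) :
    IsCompl (A.comap T.subtype) (C.comap T.subtype) := by
  constructor
  · rw [disjoint_iff, ← Submodule.comap_inf, hd, Submodule.comap_bot, Submodule.ker_subtype]
  · rw [codisjoint_iff]
    apply Submodule.map_injective_of_injective (Submodule.injective_subtype T)
    rw [Submodule.map_sup, Submodule.map_comap_subtype, Submodule.map_comap_subtype,
      Submodule.map_top, Submodule.range_subtype, inf_eq_right.mpr hA, inf_eq_right.mpr hC,
      hs]

end Aux3

end AuxProof

/-- Over a Prüfer domain (a commutative domain in which every finitely generated ideal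
is projective), a module is simple-direct-injective iff its torsion submodule is. -/
theorem stmt_13 {R : Type*} [CommRing R] [IsDomain R]
    (hPrufer : ∀ I : Ideal R, I.FG → Module.Projective R I)
    (M : Type*) [AddCommGroup M] [Module R M] :
    SimpleDirectInjective R M ↔ SimpleDirectInjective R (Submodule.torsion R M) := by
  set T := Submodule.torsion R M with hTdef
  have hinj := Submodule.injective_subtype T
  constructor
  · -- M SDI → T(M) SDI
    intro hM A B hA hB he hBs
    obtain ⟨e⟩ := he
    obtain ⟨B₂, hB₂⟩ := hBs
    haveI := hA; haveI := hB
    let eA := Submodule.equivMapOfInjective T.subtype hinj A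
    let eB := Submodule.equivMapOfInjective T.subtype hinj B
    have hA' : IsSimpleModule R (A.map T.subtype) := IsSimpleModule.congr eA.symm
    have hB' : IsSimpleModule R (B.map T.subtype) := IsSimpleModule.congr eB.symm
    obtain ⟨hdB, hsB⟩ := map_subtype_compl hB₂
    obtain ⟨D, hD⟩ := exists_isCompl_of_compl_in_torsion hPrufer (B.map T.subtype)
      (B₂.map T.subtype) hB' hdB hsB
    obtain ⟨D', hD'⟩ := hM (A.map T.subtype) (B.map T.subtype) hA' hB'
      ⟨eA.symm ≪≫ₗ e ≪≫ₗ eB⟩ ⟨D, hD⟩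
    have hAT : A.map T.subtype ≤ T := Submodule.map_subtype_le T A
    have h1 : A.map T.subtype ⊓ (D' ⊓ T) = ⊥ := by
      rw [← inf_assoc, disjoint_iff.mp hD'.disjoint, bot_inf_eq]
    have h2 : A.map T.subtype ⊔ (D' ⊓ T) = T := by
      rw [← sup_inf_assoc_of_le _ hAT, codisjoint_iff.mp hD'.codisjoint, top_inf_eq]
    have hcc := comap_subtype_isCompl hAT inf_le_right h1 h2
    rw [show (A.map T.subtype).comap T.subtype = A by
          rw [Submodule.comap_map_eq, Submodule.ker_subtype, sup_bot_eq]] at hcc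
    exact ⟨_, hcc⟩
  · -- T(M) SDI → M SDI
    intro hT A B hA hB he hBs
    obtain ⟨e⟩ := he
    obtain ⟨C, hC⟩ := hBs
    haveI := hA; haveI := hB
    by_cases hann : A.annihilator = ⊥
    · exact exists_isCompl_of_ann_bot A hA hann
    have heq : A.annihilator = B.annihilator := e.annihilator_eq
    have hannB : B.annihilator ≠ ⊥ := heq ▸ hann
    have hle : ∀ P : Submodule R M, P.annihilator ≠ ⊥ → P ≤ T := by
      intro P hP x hx
      obtain ⟨r, hrP, hr0⟩ := Submodule.exists_mem_ne_zero_of_ne_bot hP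
      exact (Submodule.mem_torsion_iff x).mpr
        ⟨⟨r, mem_nonZeroDivisors_of_ne_zero hr0⟩, Submodule.mem_annihilator.mp hrP x hx⟩
    have hBT := hle B hannB
    have hAT := hle A hann
    have h1 : B ⊓ (C ⊓ T) = ⊥ := by
      rw [← inf_assoc, disjoint_iff.mp hC.disjoint, bot_inf_eq]
    have h2 : B ⊔ (C ⊓ T) = T := by
      rw [← sup_inf_assoc_of_le _ hBT, codisjoint_iff.mp hC.codisjoint, top_inf_eq]
    have hBc := comap_subtype_isCompl hBT inf_le_right h1 h2
    have hmapA : (A.comap T.subtype).map T.subtype = A := by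
      rw [Submodule.map_comap_subtype]; exact inf_eq_right.mpr hAT
    have hmapB : (B.comap T.subtype).map T.subtype = B := by
      rw [Submodule.map_comap_subtype]; exact inf_eq_right.mpr hBT
    let eA : (A.comap T.subtype) ≃ₗ[R] A :=
      (Submodule.equivMapOfInjective T.subtype hinj _).trans (LinearEquiv.ofEq _ _ hmapA)
    let eB : (B.comap T.subtype) ≃ₗ[R] B :=
      (Submodule.equivMapOfInjective T.subtype hinj _).trans (LinearEquiv.ofEq _ _ hmapB)
    obtain ⟨D, hD⟩ := hT (A.comap T.subtype) (B.comap T.subtype)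
      (IsSimpleModule.congr eA) (IsSimpleModule.congr eB)
      ⟨eA ≪≫ₗ e ≪≫ₗ eB.symm⟩ ⟨_, hBc⟩
    obtain ⟨hd, hs⟩ := map_subtype_compl hD
    rw [hmapA] at hd hs
    exact exists_isCompl_of_compl_in_torsion hPrufer A _ hA hd hs
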